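/- (Breitenberger uncertainty principle for the circle) Let f : 𝕋 → ℂ be absolutely continuous with f' ∈ L²(𝕋). Then |∫₀^{2π} e^{iθ}|f(e^{iθ})|² dθ|² ≤ 4 ‖f‖² · ‖f'‖², where ‖·‖ is the L²(𝕋)-norm. -/

import Mathlib

set_option maxHeartbeats 1000000
open Complex Real MeasureTheory intervalIntegral Set ComplexConjugate

lemma parts_core (T : ℝ) (hT : 0 ≤ T) (u' v' : ℝ → ℂ)
    (hu : ∀ a b : ℝ, IntervalIntegrable u' volume a b)
    (hv : ∀ a b : ℝ, IntervalIntegrable v' volume a b) :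
    (∫ x in (0:ℝ)..T, u' x * (∫ y in (0:ℝ)..x, v' y)) +
      (∫ y in (0:ℝ)..T, (∫ x in (0:ℝ)..y, u' x) * v' y) =
      (∫ x in (0:ℝ)..T, u' x) * (∫ y in (0:ℝ)..T, v' y) := by
  set μ := volume.restrict (Set.Ioc (0:ℝ) T) with hμ
  have hui : Integrable u' μ := (hu 0 T).1
  have hvi : Integrable v' μ := (hv 0 T).1
  set G : ℝ × ℝ → ℂ := ({p : ℝ × ℝ | p.2 ≤ p.1}).indicator (fun p => u' p.1 * v' p.2) with hG
  have hmeas : MeasurableSet {p : ℝ × ℝ | p.2 ≤ p.1} :=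
    measurableSet_le measurable_snd measurable_fst
  have hGint : Integrable G (μ.prod μ) := ((hui.mul_prod hvi)).indicator hmeas
  -- first integral as iterated integral of G
  have h1 : (∫ x in (0:ℝ)..T, u' x * (∫ y in (0:ℝ)..x, v' y)) =
      ∫ x, ∫ y, G (x, y) ∂μ ∂μ := by
    rw [intervalIntegral.integral_of_le hT]
    refine setIntegral_congr_ae measurableSet_Ioc ?_
    filter_upwards with x hx
    have e1 : ∫ y, G (x, y) ∂μ = ∫ y, (Set.Ioc (0:ℝ) x).indicator (fun y => u' x * v' y) y ∂μ := by
      refine integral_congr_ae ?_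
      rw [Filter.EventuallyEq, hμ, ae_restrict_iff' measurableSet_Ioc]
      filter_upwards with y hy
      simp only [hG, Set.indicator, Set.mem_setOf_eq, Set.mem_Ioc]
      by_cases h : y ≤ x <;> simp [h, hy.1, hy.2] <;> tauto
    have e2 : Set.Ioc 0 x ∩ Set.Ioc 0 T = Set.Ioc 0 x := by
      rw [Set.Ioc_inter_Ioc, sup_idem, inf_eq_left.mpr hx.2]
    rw [e1, hμ, MeasureTheory.integral_indicator measurableSet_Ioc,
      Measure.restrict_restrict measurableSet_Ioc, e2, MeasureTheory.integral_const_mul,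
      ← intervalIntegral.integral_of_le (le_of_lt hx.1)]
  -- inner integral in x of G
  have h2 : (∫ y in (0:ℝ)..T, (∫ x in (0:ℝ)..y, u' x) * v' y) =
      ∫ y, ((∫ x in (0:ℝ)..T, u' x) * v' y - ∫ x, G (x, y) ∂μ) ∂μ := by
    rw [intervalIntegral.integral_of_le hT]
    refine setIntegral_congr_ae measurableSet_Ioc ?_
    filter_upwards with y hy
    have e1 : ∫ x, G (x, y) ∂μ = ∫ x, (Set.Ici y).indicator (fun x => u' x * v' y) x ∂μ := by
      refine integral_congr_ae ?_
      filter_upwards with x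
      simp only [hG, Set.indicator, Set.mem_setOf_eq, Set.mem_Ici]
    have e2 : Set.Ici y ∩ Set.Ioc 0 T = Set.Icc y T := by
      ext z
      simp only [Set.mem_inter_iff, Set.mem_Ici, Set.mem_Ioc, Set.mem_Icc]
      exact ⟨fun ⟨a, _, c⟩ => ⟨a, c⟩, fun ⟨a, b⟩ => ⟨a, lt_of_lt_of_le hy.1 a, b⟩⟩
    rw [e1, hμ, MeasureTheory.integral_indicator measurableSet_Ici,
      Measure.restrict_restrict measurableSet_Ici, e2, integral_Icc_eq_integral_Ioc,
      MeasureTheory.integral_mul_const, ← intervalIntegral.integral_of_le hy.2]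
    have e3 : (∫ x in y..T, u' x) = (∫ x in (0:ℝ)..T, u' x) - ∫ x in (0:ℝ)..y, u' x := by
      rw [eq_sub_iff_add_eq, add_comm]
      exact intervalIntegral.integral_add_adjacent_intervals (hu 0 y) (hu y T)
    rw [e3]; ring
  have hIy : Integrable (fun y => ∫ x, G (x, y) ∂μ) μ := hGint.integral_prod_right
  have hsplit : ∫ y, ((∫ x in (0:ℝ)..T, u' x) * v' y - ∫ x, G (x, y) ∂μ) ∂μ =
      (∫ x in (0:ℝ)..T, u' x) * (∫ y, v' y ∂μ) - ∫ y, ∫ x, G (x, y) ∂μ ∂μ := by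
    rw [integral_sub (hvi.const_mul _) hIy, MeasureTheory.integral_const_mul]
  have hswap : ∫ x, ∫ y, G (x, y) ∂μ ∂μ = ∫ y, ∫ x, G (x, y) ∂μ ∂μ := by
    exact integral_integral_swap (f := fun x y => G (x, y)) (by exact hGint)
  have hv' : ∫ y, v' y ∂μ = ∫ y in (0:ℝ)..T, v' y := (intervalIntegral.integral_of_le hT).symm
  rw [h1, h2, hsplit, hswap, hv']
  ring

lemma parts (T : ℝ) (hT : 0 ≤ T) (u' v' : ℝ → ℂ)
    (hu : ∀ a b : ℝ, IntervalIntegrable u' volume a b)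
    (hv : ∀ a b : ℝ, IntervalIntegrable v' volume a b) (u0 v0 : ℂ) :
    ∫ x in (0:ℝ)..T, (u' x * (v0 + ∫ y in (0:ℝ)..x, v' y)
        + (u0 + ∫ y in (0:ℝ)..x, u' y) * v' x)
      = (u0 + ∫ x in (0:ℝ)..T, u' x) * (v0 + ∫ x in (0:ℝ)..T, v' x) - u0 * v0 := by
  have hU : Continuous (fun x => ∫ y in (0:ℝ)..x, u' y) := intervalIntegral.continuous_primitive hu 0
  have hV : Continuous (fun x => ∫ y in (0:ℝ)..x, v' y) := intervalIntegral.continuous_primitive hv 0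
  have hA : IntervalIntegrable (fun x => u' x * (v0 + ∫ y in (0:ℝ)..x, v' y)) volume 0 T :=
    (hu 0 T).mul_continuousOn ((continuous_const.add hV).continuousOn)
  have hB : IntervalIntegrable (fun x => (u0 + ∫ y in (0:ℝ)..x, u' y) * v' x) volume 0 T :=
    (hv 0 T).continuousOn_mul ((continuous_const.add hU).continuousOn)
  have hA1 : IntervalIntegrable (fun x => u' x * v0) volume 0 T := (hu 0 T).mul_const _
  have hA2 : IntervalIntegrable (fun x => u' x * ∫ y in (0:ℝ)..x, v' y) volume 0 T :=
    (hu 0 T).mul_continuousOn hV.continuousOn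
  have hB1 : IntervalIntegrable (fun x => u0 * v' x) volume 0 T := (hv 0 T).const_mul _
  have hB2 : IntervalIntegrable (fun x => (∫ y in (0:ℝ)..x, u' y) * v' x) volume 0 T :=
    (hv 0 T).continuousOn_mul hU.continuousOn
  rw [intervalIntegral.integral_add hA hB]
  have eA : ∫ x in (0:ℝ)..T, u' x * (v0 + ∫ y in (0:ℝ)..x, v' y)
      = (∫ x in (0:ℝ)..T, u' x * v0) + ∫ x in (0:ℝ)..T, u' x * ∫ y in (0:ℝ)..x, v' y := by
    rw [← intervalIntegral.integral_add hA1 hA2]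
    congr 1; ext x; ring
  have eB : ∫ x in (0:ℝ)..T, (u0 + ∫ y in (0:ℝ)..x, u' y) * v' x
      = (∫ x in (0:ℝ)..T, u0 * v' x) + ∫ x in (0:ℝ)..T, (∫ y in (0:ℝ)..x, u' y) * v' x := by
    rw [← intervalIntegral.integral_add hB1 hB2]
    congr 1; ext x; ring
  rw [eA, eB, intervalIntegral.integral_mul_const, intervalIntegral.integral_const_mul]
  have := parts_core T hT u' v' hu hv
  rw [add_add_add_comm, this]
  ring

lemma myconj_intervalIntegrable {f : ℝ → ℂ} {a b : ℝ}
    (h : IntervalIntegrable f volume a b) :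
    IntervalIntegrable (fun x => conj (f x)) volume a b := by
  refine ⟨?_, ?_⟩
  · have := (Complex.conjLIE.toLinearIsometry.toContinuousLinearMap).integrable_comp h.1
    simp at this; exact this
  · have := (Complex.conjLIE.toLinearIsometry.toContinuousLinearMap).integrable_comp h.2
    simp at this; exact this

lemma myconj_intervalIntegral (f : ℝ → ℂ) (a b : ℝ) :
    (∫ x in a..b, conj (f x)) = conj (∫ x in a..b, f x) := by
  simp only [intervalIntegral, integral_conj, map_sub]

/-- Breitenberger's uncertainty principle for the circle: for `f` absolutely
continuous on `𝕋` with angular derivative `f' ∈ L²(𝕋)`,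
`|∫₀^{2π} e^{iθ}|f(e^{iθ})|² dθ|² ≤ 4‖f‖²‖f'‖²`. -/
theorem breitenberger_uncertainty (f f' : ℝ → ℂ)
    (hper : Function.Periodic f (2 * π))
    (hloc : MeasureTheory.LocallyIntegrable f' MeasureTheory.volume)
    (hAC : ∀ θ : ℝ, f θ = f 0 + ∫ s in (0:ℝ)..θ, f' s)
    (hL2 : MeasureTheory.MemLp f' 2 (MeasureTheory.volume.restrict (Set.Ioc 0 (2 * π)))) :
    ‖∫ θ in (0:ℝ)..(2 * π), Complex.exp (Complex.I * θ) * (‖f θ‖ ^ 2 : ℝ)‖ ^ 2 ≤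
      4 * (∫ θ in (0:ℝ)..(2 * π), ‖f θ‖ ^ 2) * ∫ θ in (0:ℝ)..(2 * π), ‖f' θ‖ ^ 2 := by
  have hT : (0:ℝ) ≤ 2 * π := by positivity
  have hInt : ∀ a b : ℝ, IntervalIntegrable f' volume a b := fun a b =>
    (hloc.integrableOn_isCompact isCompact_uIcc).intervalIntegrable
  have hfc : Continuous f := by
    have hfe : f = fun θ => f 0 + ∫ s in (0:ℝ)..θ, f' s := funext hAC
    rw [hfe]
    exact continuous_const.add (intervalIntegral.continuous_primitive hInt 0)
  have hEc : Continuous (fun θ : ℝ => Complex.exp (Complex.I * θ)) :=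
    Complex.continuous_exp.comp (continuous_const.mul Complex.continuous_ofReal)
  have hIEc : Continuous (fun θ : ℝ => Complex.I * Complex.exp (Complex.I * θ)) :=
    continuous_const.mul hEc
  have hD : ∀ t : ℝ, HasDerivAt (fun θ : ℝ => Complex.exp (Complex.I * θ))
      (Complex.I * Complex.exp (Complex.I * t)) t := by
    intro t
    have h1 : HasDerivAt (fun θ : ℝ => (θ : ℂ)) 1 t := by
      simpa using (hasDerivAt_id t).ofReal_comp
    simpa [mul_comm] using (h1.const_mul Complex.I).cexp
  have hE : ∀ x : ℝ, (1:ℂ) + ∫ θ in (0:ℝ)..x, Complex.I * Complex.exp (Complex.I * θ)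
      = Complex.exp (Complex.I * x) := by
    intro x
    rw [intervalIntegral.integral_eq_sub_of_hasDerivAt (fun t _ => hD t)
      (hIEc.intervalIntegrable 0 x)]
    simp
  set g' : ℝ → ℂ := fun θ => Complex.I * Complex.exp (Complex.I * θ) * f θ
      + Complex.exp (Complex.I * θ) * f' θ with hg'
  have hg'int : ∀ a b : ℝ, IntervalIntegrable g' volume a b := fun a b =>
    ((hIEc.mul hfc).intervalIntegrable a b).add ((hInt a b).continuousOn_mul hEc.continuousOn)
  have hgAC : ∀ x : ℝ, 0 ≤ x →
      f 0 + (∫ θ in (0:ℝ)..x, g' θ) = Complex.exp (Complex.I * x) * f x := by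
    intro x hx
    have hp := parts x hx (fun θ => Complex.I * Complex.exp (Complex.I * θ)) f'
      (fun a b => hIEc.intervalIntegrable a b) hInt 1 (f 0)
    have heq : ∀ θ : ℝ, (Complex.I * Complex.exp (Complex.I * θ)) *
        (f 0 + ∫ s in (0:ℝ)..θ, f' s)
        + ((1:ℂ) + ∫ y in (0:ℝ)..θ, Complex.I * Complex.exp (Complex.I * y)) * f' θ = g' θ := by
      intro θ; rw [← hAC θ, hE θ]
    rw [intervalIntegral.integral_congr (fun θ _ => heq θ), hE x, ← hAC x] at hp
    rw [hp]; ring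
  have hconjInt : ∀ a b : ℝ, IntervalIntegrable (fun θ => conj (f' θ)) volume a b :=
    fun a b => myconj_intervalIntegrable (hInt a b)
  have hconjAC : ∀ θ : ℝ, conj (f 0) + ∫ s in (0:ℝ)..θ, conj (f' s) = conj (f θ) := by
    intro θ
    rw [hAC θ, map_add, myconj_intervalIntegral]
  have hp2 := parts (2 * π) hT g' (fun θ => conj (f' θ)) hg'int hconjInt (f 0) (conj (f 0))
  have hf2π : f (2 * π) = f 0 := by simpa using hper 0
  have hexp2π : Complex.exp (Complex.I * ((2 * π : ℝ) : ℂ)) = 1 := by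
    have : Complex.I * ((2 * π : ℝ) : ℂ) = 2 * π * Complex.I := by push_cast; ring
    rw [this, Complex.exp_two_pi_mul_I]
  have heq2 : ∀ x ∈ Set.uIcc (0:ℝ) (2 * π), (fun x =>
      g' x * (conj (f 0) + ∫ s in (0:ℝ)..x, conj (f' s))
      + (f 0 + ∫ y in (0:ℝ)..x, g' y) * conj (f' x)) x =
      (fun x => g' x * conj (f x)
      + Complex.exp (Complex.I * x) * f x * conj (f' x)) x := by
    intro x hx
    rw [Set.uIcc_of_le hT] at hx
    simp only
    rw [hconjAC x, hgAC x hx.1]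
  rw [intervalIntegral.integral_congr heq2, hgAC (2 * π) hT, hconjAC (2 * π),
    hf2π, hexp2π, one_mul] at hp2
  -- hp2 : ∫ (g' x * conj (f x) + exp(Ix) f x conj (f' x)) = f0 conj f0 - f0 conj f0
  have hp3 : (∫ x in (0:ℝ)..(2 * π), (g' x * conj (f x)
      + Complex.exp (Complex.I * x) * f x * conj (f' x))) = 0 := by
    rw [hp2]; ring
  set A : ℂ := ∫ θ in (0:ℝ)..(2 * π), Complex.exp (Complex.I * θ) * ((‖f θ‖ ^ 2 : ℝ) : ℂ) with hA
  set B : ℂ := ∫ θ in (0:ℝ)..(2 * π),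
      Complex.exp (Complex.I * θ) * (f' θ * conj (f θ) + f θ * conj (f' θ)) with hB
  have hfconjc : Continuous (fun x => conj (f x)) := Complex.continuous_conj.comp hfc
  have intB : IntervalIntegrable (fun θ : ℝ =>
      Complex.exp (Complex.I * θ) * (f' θ * conj (f θ) + f θ * conj (f' θ))) volume 0 (2 * π) := by
    have h1 : IntervalIntegrable (fun θ : ℝ => f' θ *
        (conj (f θ) * Complex.exp (Complex.I * θ))) volume 0 (2 * π) :=
      (hInt 0 (2 * π)).mul_continuousOn ((hfconjc.mul hEc).continuousOn)
    have h2 : IntervalIntegrable (fun θ : ℝ => (conj (f' θ)) *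
        (f θ * Complex.exp (Complex.I * θ))) volume 0 (2 * π) :=
      (hconjInt 0 (2 * π)).mul_continuousOn ((hfc.mul hEc).continuousOn)
    have := h1.add h2
    have heq : (fun θ : ℝ => f' θ * (conj (f θ) * Complex.exp (Complex.I * θ))
        + (conj (f' θ)) * (f θ * Complex.exp (Complex.I * θ))) = (fun θ : ℝ =>
        Complex.exp (Complex.I * θ) * (f' θ * conj (f θ) + f θ * conj (f' θ))) := by
      funext θ; ring
    rwa [heq] at this
  have intA : IntervalIntegrable (fun θ : ℝ =>
      Complex.I * (Complex.exp (Complex.I * θ) * ((‖f θ‖ ^ 2 : ℝ) : ℂ))) volume 0 (2 * π) :=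
    ((continuous_const.mul (hEc.mul
      (Complex.continuous_ofReal.comp ((hfc.norm).pow 2)))).intervalIntegrable 0 (2 * π))
  have hIA : Complex.I * A + B = 0 := by
    rw [hA, hB, ← intervalIntegral.integral_const_mul, ← intervalIntegral.integral_add intA intB,
      ← hp3]
    apply intervalIntegral.integral_congr
    intro x _
    simp only [hg']
    have : ((‖f x‖ ^ 2 : ℝ) : ℂ) = f x * conj (f x) := by
      rw [Complex.mul_conj]; norm_cast; simp [Complex.sq_norm]
    rw [this]; ring
  have habsAB : ‖A‖ = ‖B‖ := by
    have : Complex.I * A = -B := by linear_combination hIA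
    calc ‖A‖ = ‖Complex.I * A‖ := by simp
    _ = ‖-B‖ := by rw [this]
    _ = ‖B‖ := by simp
  -- bound abs B by 2∫‖f‖‖f'‖
  have hnormB : ‖B‖ ≤ ∫ θ in (0:ℝ)..(2 * π), 2 * (‖f θ‖ * ‖f' θ‖) := by
    have h1 : ‖B‖ ≤ ∫ θ in (0:ℝ)..(2 * π),
        ‖Complex.exp (Complex.I * θ) * (f' θ * conj (f θ) + f θ * conj (f' θ))‖ :=
      intervalIntegral.norm_integral_le_integral_norm hT
    have hrhs : IntervalIntegrable (fun θ : ℝ => 2 * (‖f θ‖ * ‖f' θ‖)) volume 0 (2 * π) := by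
      have := ((hInt 0 (2 * π)).norm.continuousOn_mul (hfc.norm.continuousOn)).const_mul (2:ℝ)
      simpa using this
    have h2 : (∫ θ in (0:ℝ)..(2 * π),
        ‖Complex.exp (Complex.I * θ) * (f' θ * conj (f θ) + f θ * conj (f' θ))‖)
        ≤ ∫ θ in (0:ℝ)..(2 * π), 2 * (‖f θ‖ * ‖f' θ‖) := by
      apply intervalIntegral.integral_mono_on hT intB.norm hrhs
      intro x _
      have he1 : ‖Complex.exp (Complex.I * (x:ℂ))‖ = 1 := by
        simp [Complex.norm_exp]
      set z : ℂ := f' x * conj (f x) with hz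
      have hzc : f x * conj (f' x) = conj z := by rw [hz]; simp [map_mul]; ring
      calc ‖Complex.exp (Complex.I * x) * (f' x * conj (f x) + f x * conj (f' x))‖
          = ‖z + conj z‖ := by rw [norm_mul, he1, one_mul, hz, hzc]
        _ = ‖((2 * z.re : ℝ) : ℂ)‖ := by rw [Complex.add_conj]
        _ = 2 * |z.re| := by rw [Complex.norm_real]; simp [abs_mul]
        _ ≤ 2 * ‖z‖ := by
            have := Complex.abs_re_le_norm z
            nlinarith [norm_nonneg z]
        _ = 2 * (‖f x‖ * ‖f' x‖) := by
            rw [hz, norm_mul, Complex.norm_conj]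
            ring
    calc ‖B‖ = ‖B‖ := rfl
      _ ≤ _ := h1
      _ ≤ _ := h2
  -- Cauchy–Schwarz
  set μ2 := volume.restrict (Set.Ioc (0:ℝ) (2 * π)) with hμ2
  haveI : IsFiniteMeasure μ2 := by
    constructor
    rw [hμ2, Measure.restrict_apply_univ]
    exact measure_Ioc_lt_top
  obtain ⟨C, hC⟩ := (isCompact_Icc (a := (0:ℝ)) (b := 2 * π)).exists_bound_of_continuousOn
    hfc.norm.continuousOn
  have hMf : MemLp (fun θ => ‖f θ‖) (ENNReal.ofReal 2) μ2 := by
    apply MemLp.of_bound (hfc.norm.aestronglyMeasurable) C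
    rw [hμ2, ae_restrict_iff' measurableSet_Ioc]
    filter_upwards with x hx
    exact hC x (Set.Ioc_subset_Icc_self hx)
  have hMf' : MemLp (fun θ => ‖f' θ‖) (ENNReal.ofReal 2) μ2 := by
    have : (ENNReal.ofReal 2) = 2 := by norm_num
    rw [this, hμ2]
    exact hL2.norm
  have holder := integral_mul_le_Lp_mul_Lq_of_nonneg (μ := μ2)
    Real.HolderConjugate.two_two
    (Filter.Eventually.of_forall fun x => norm_nonneg (f x))
    (Filter.Eventually.of_forall fun x => norm_nonneg (f' x)) hMf hMf'
  have hrw2 : ∀ g : ℝ → ℂ, (∫ a, ‖g a‖ ^ (2:ℝ) ∂μ2) = ∫ θ in (0:ℝ)..(2 * π), ‖g θ‖ ^ 2 := by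
    intro g
    rw [intervalIntegral.integral_of_le hT, hμ2]
    congr 1
    funext a
    rw [show ((2:ℝ) = ((2:ℕ):ℝ)) by norm_num, Real.rpow_natCast]
  have hS : (∫ a, ‖f a‖ * ‖f' a‖ ∂μ2) = ∫ θ in (0:ℝ)..(2 * π), ‖f θ‖ * ‖f' θ‖ :=
    (intervalIntegral.integral_of_le hT).symm
  rw [hrw2 f, hrw2 f', hS] at holder
  set X : ℝ := ∫ θ in (0:ℝ)..(2 * π), ‖f θ‖ ^ 2 with hX
  set Y : ℝ := ∫ θ in (0:ℝ)..(2 * π), ‖f' θ‖ ^ 2 with hY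
  have hX0 : 0 ≤ X :=
    intervalIntegral.integral_nonneg hT (fun u _ => sq_nonneg _)
  have hY0 : 0 ≤ Y :=
    intervalIntegral.integral_nonneg hT (fun u _ => sq_nonneg _)
  have hfinal : ‖A‖ ≤ 2 * (X ^ ((1:ℝ)/2) * Y ^ ((1:ℝ)/2)) := by
    calc ‖A‖ = ‖B‖ := habsAB
      _ ≤ ∫ θ in (0:ℝ)..(2 * π), 2 * (‖f θ‖ * ‖f' θ‖) := hnormB
      _ = 2 * ∫ θ in (0:ℝ)..(2 * π), ‖f θ‖ * ‖f' θ‖ := intervalIntegral.integral_const_mul _ _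
      _ ≤ 2 * (X ^ ((1:ℝ)/2) * Y ^ ((1:ℝ)/2)) := by
          have h2 : (0:ℝ) ≤ 2 := by norm_num
          exact mul_le_mul_of_nonneg_left holder h2
  have hsq : (X ^ ((1:ℝ)/2)) ^ 2 = X := by
    rw [← Real.rpow_natCast (X ^ ((1:ℝ)/2)) 2, ← Real.rpow_mul hX0]
    norm_num
  have hsq' : (Y ^ ((1:ℝ)/2)) ^ 2 = Y := by
    rw [← Real.rpow_natCast (Y ^ ((1:ℝ)/2)) 2, ← Real.rpow_mul hY0]
    norm_num
  calc ‖A‖ ^ 2 ≤ (2 * (X ^ ((1:ℝ)/2) * Y ^ ((1:ℝ)/2))) ^ 2 :=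
        pow_le_pow_left₀ (norm_nonneg A) hfinal 2
    _ = 4 * (X ^ ((1:ℝ)/2)) ^ 2 * (Y ^ ((1:ℝ)/2)) ^ 2 := by ring
    _ = 4 * X * Y := by rw [hsq, hsq']
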